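/- Let (E_t, β_{s,t}) be a subproduct system of two-dimensional Hilbert spaces with a basis (x_t,y_t)_t of type E_5. Then for every automorphism (θ_t)_t of (E_t,β) there exist c, b ∈ ℝ such that θ_t x_t = e^{ict} x_t and θ_t y_t = e^{ib} e^{ict} y_t for all t. -/

import Mathlib

noncomputable section

open scoped TensorProduct ComplexConjugate

namespace SubprodHilbert

section TensorConstruction


variable {E F : Type*} [NormedAddCommGroup E] [InnerProductSpace ℂ E]
  [NormedAddCommGroup F] [InnerProductSpace ℂ F]

local notation "⟪" x ", " y "⟫" => @inner ℂ _ _ x y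

/-- For fixed `u, v`, the ℂ-bilinear functional `(u', v') ↦ ⟪u,u'⟫ ⟪v,v'⟫`. -/
def innerAux (u : E) (v : F) : E →ₗ[ℂ] F →ₗ[ℂ] ℂ :=
  LinearMap.mk₂ ℂ (fun u' v' => ⟪u, u'⟫ * ⟪v, v'⟫)
    (fun m₁ m₂ n => by simp [inner_add_right]; ring)
    (fun c m n => by simp [inner_smul_right]; ring)
    (fun m n₁ n₂ => by simp [inner_add_right]; ring)
    (fun c m n => by simp [inner_smul_right]; ring)

@[simp] lemma innerAux_apply (u u' : E) (v v' : F) :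
    innerAux u v u' v' = ⟪u, u'⟫ * ⟪v, v'⟫ := rfl

/-- The (conjugate-linear-in-the-first-variable) map sending `z : E ⊗ F` to the linear
functional `w ↦ ⟪z, w⟫`. -/
def innerFunc : E ⊗[ℂ] F →+ (E ⊗[ℂ] F →ₗ[ℂ] ℂ) :=
  TensorProduct.liftAddHom
    (AddMonoidHom.mk'
      (fun u => AddMonoidHom.mk' (fun v => TensorProduct.lift (innerAux u v))
        (fun v₁ v₂ => by
          apply TensorProduct.ext'
          intro u' v'
          simp [inner_add_left]
          ring))
      (fun u₁ u₂ => by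
        ext v : 1
        apply TensorProduct.ext'
        intro u' v'
        simp [inner_add_left]
        ring))
    (fun c u v => by
      apply TensorProduct.ext'
      intro u' v'
      simp [inner_smul_left]
      ring)

@[simp] lemma innerFunc_tmul (u u' : E) (v v' : F) :
    innerFunc (u ⊗ₜ[ℂ] v) (u' ⊗ₜ[ℂ] v') = ⟪u, u'⟫ * ⟪v, v'⟫ := rfl

lemma innerFunc_smul (c : ℂ) (z : E ⊗[ℂ] F) :
    innerFunc (c • z) = conj c • innerFunc z := by
  induction z using TensorProduct.induction_on with
  | zero => simp
  | tmul u v =>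
      rw [TensorProduct.smul_tmul']
      apply TensorProduct.ext'
      intro u' v'
      simp [inner_smul_left]
      ring
  | add z₁ z₂ h₁ h₂ => rw [smul_add, map_add, map_add, h₁, h₂, smul_add]

lemma innerFunc_conj_symm (z w : E ⊗[ℂ] F) :
    conj (innerFunc w z) = innerFunc z w := by
  induction z using TensorProduct.induction_on with
  | zero => simp
  | tmul u v =>
      induction w using TensorProduct.induction_on with
      | zero => simp
      | tmul u' v' =>
          simp only [innerFunc_tmul, map_mul, inner_conj_symm]
      | add w₁ w₂ h₁ h₂ => simp [map_add, h₁, h₂]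
  | add z₁ z₂ h₁ h₂ => simp [map_add, h₁, h₂]

lemma exists_orthonormal_rep (z : E ⊗[ℂ] F) :
    ∃ (n : ℕ) (e : Fin n → E) (w : Fin n → F),
      Orthonormal ℂ e ∧ z = ∑ i, e i ⊗ₜ[ℂ] w i := by
  obtain ⟨S, rfl⟩ := TensorProduct.exists_finset z
  set U : Submodule ℂ E := Submodule.span ℂ (Prod.fst '' (S : Set (E × F))) with hU
  haveI : FiniteDimensional ℂ U :=
    FiniteDimensional.span_of_finite ℂ (S.finite_toSet.image _)
  let b : OrthonormalBasis (Fin (Module.finrank ℂ U)) ℂ U := stdOrthonormalBasis ℂ U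
  have hone : Orthonormal ℂ (fun i => (b i : E)) := by
    have hb := b.orthonormal
    constructor
    · intro i; simpa [norm] using hb.1 i
    · intro i j hij; simpa [Submodule.coe_inner] using hb.2 hij
  refine ⟨_, fun i => (b i : E), fun i => ∑ p ∈ S, ⟪(b i : E), p.1⟫ • p.2, hone, ?_⟩
  have key : ∀ p ∈ S, p.1 ⊗ₜ[ℂ] p.2 = ∑ i, ⟪(b i : E), p.1⟫ • ((b i : E) ⊗ₜ[ℂ] p.2) := by
    intro p hp
    have hmem : p.1 ∈ U := Submodule.subset_span ⟨p, hp, rfl⟩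
    have hrep : ((∑ i, (⟪b i, (⟨p.1, hmem⟩ : U)⟫ : ℂ) • b i : U) : E) = p.1 := by
      rw [b.sum_repr' ⟨p.1, hmem⟩]
    have h2 : ∀ i, (⟪b i, (⟨p.1, hmem⟩ : U)⟫ : ℂ) = ⟪(b i : E), p.1⟫ := fun i =>
      Submodule.coe_inner U (b i) ⟨p.1, hmem⟩
    have hrep' : p.1 = ∑ i, ⟪(b i : E), p.1⟫ • (b i : E) := by
      calc p.1 = ((∑ i, (⟪b i, (⟨p.1, hmem⟩ : U)⟫ : ℂ) • b i : U) : E) := hrep.symm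
        _ = ∑ i, (⟪b i, (⟨p.1, hmem⟩ : U)⟫ : ℂ) • (b i : E) := by push_cast; rfl
        _ = ∑ i, ⟪(b i : E), p.1⟫ • (b i : E) := Finset.sum_congr rfl fun i _ => by rw [h2]
    calc p.1 ⊗ₜ[ℂ] p.2 = (∑ i, ⟪(b i : E), p.1⟫ • (b i : E)) ⊗ₜ[ℂ] p.2 := by rw [← hrep']
      _ = ∑ i, ⟪(b i : E), p.1⟫ • ((b i : E) ⊗ₜ[ℂ] p.2) := by
          rw [TensorProduct.sum_tmul]
          refine Finset.sum_congr rfl fun i _ => ?_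
          rw [TensorProduct.smul_tmul']
  calc ∑ p ∈ S, p.1 ⊗ₜ[ℂ] p.2
      = ∑ p ∈ S, ∑ i, ⟪(b i : E), p.1⟫ • ((b i : E) ⊗ₜ[ℂ] p.2) :=
        Finset.sum_congr rfl key
    _ = ∑ i, ∑ p ∈ S, ⟪(b i : E), p.1⟫ • ((b i : E) ⊗ₜ[ℂ] p.2) := Finset.sum_comm
    _ = ∑ i, (b i : E) ⊗ₜ[ℂ] (∑ p ∈ S, ⟪(b i : E), p.1⟫ • p.2) := by
        refine Finset.sum_congr rfl fun i _ => ?_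
        rw [TensorProduct.tmul_sum]
        refine Finset.sum_congr rfl fun p _ => ?_
        rw [TensorProduct.tmul_smul]

lemma innerFunc_self (n : ℕ) (e : Fin n → E) (w : Fin n → F) (he : Orthonormal ℂ e) :
    innerFunc (∑ i, e i ⊗ₜ[ℂ] w i) (∑ i, e i ⊗ₜ[ℂ] w i) = ∑ i, ⟪w i, w i⟫ := by
  have hee : ∀ i j, (⟪e i, e j⟫ : ℂ) = if i = j then 1 else 0 := orthonormal_iff_ite.mp he
  simp only [map_sum, LinearMap.coe_sum, Finset.sum_apply, innerFunc_tmul, hee, ite_mul,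
    one_mul, zero_mul]
  rw [Finset.sum_comm]
  simp

/-- The inner-product-space core on the algebraic tensor product of two complex
inner product spaces, determined by `⟪u ⊗ v, u' ⊗ v'⟫ = ⟪u,u'⟫ ⟪v,v'⟫`. -/
def tensorCore : InnerProductSpace.Core ℂ (E ⊗[ℂ] F) where
  inner z w := innerFunc z w
  conj_inner_symm := innerFunc_conj_symm
  re_inner_nonneg z := by
    show 0 ≤ RCLike.re (innerFunc z z)
    obtain ⟨n, e, w, he, rfl⟩ := exists_orthonormal_rep z
    rw [innerFunc_self n e w he]
    rw [map_sum]
    exact Finset.sum_nonneg fun i _ => inner_self_nonneg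
  add_left z₁ z₂ w := by
    show innerFunc (z₁ + z₂) w = innerFunc z₁ w + innerFunc z₂ w
    rw [map_add]; rfl
  smul_left z w c := by
    show innerFunc (c • z) w = conj c * innerFunc z w
    rw [innerFunc_smul]; rfl
  definite z hz := by
    replace hz : innerFunc z z = 0 := hz
    obtain ⟨n, e, w, he, rfl⟩ := exists_orthonormal_rep z
    rw [innerFunc_self n e w he] at hz
    have hz' : ∑ i, (‖w i‖ ^ 2 : ℝ) = 0 := by
      have := congrArg Complex.re hz
      simpa [← @inner_self_eq_norm_sq ℂ] using this
    have hw : ∀ i ∈ Finset.univ, w i = 0 := by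
      intro i hi
      have h0 : (‖w i‖ ^ 2 : ℝ) = 0 :=
        (Finset.sum_eq_zero_iff_of_nonneg fun j _ => sq_nonneg _).mp hz' i hi
      simpa using h0
    calc ∑ i, e i ⊗ₜ[ℂ] w i = ∑ i : Fin n, (0 : E ⊗[ℂ] F) :=
          Finset.sum_congr rfl fun i hi => by rw [hw i hi, TensorProduct.tmul_zero]
      _ = 0 := Finset.sum_const_zero

instance tensorNormedAddCommGroup : NormedAddCommGroup (E ⊗[ℂ] F) :=
  @InnerProductSpace.Core.toNormedAddCommGroup ℂ _ _ _ _ tensorCore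

instance tensorInnerProductSpace : InnerProductSpace ℂ (E ⊗[ℂ] F) :=
  InnerProductSpace.ofCore tensorCore.toCore

@[simp] lemma inner_tmul (u u' : E) (v v' : F) :
    (inner ℂ (u ⊗ₜ[ℂ] v) (u' ⊗ₜ[ℂ] v') : ℂ) = ⟪u, u'⟫ * ⟪v, v'⟫ := rfl
end TensorConstruction


/-- Cast between the fibers of a family of inner product spaces along an equality of
indices, as a linear isometric isomorphism. -/
def castE {ι : Type*} (E : ι → Type*) [∀ t, NormedAddCommGroup (E t)]
    [∀ t, InnerProductSpace ℂ (E t)] {a b : ι} (h : a = b) : E a ≃ₗᵢ[ℂ] E b := by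
  subst h; exact LinearIsometryEquiv.refl ℂ (E a)


section Discrete

variable (E F : ℕ+ → Type*)
  [∀ t, NormedAddCommGroup (E t)] [∀ t, InnerProductSpace ℂ (E t)]
  [∀ t, NormedAddCommGroup (F t)] [∀ t, InnerProductSpace ℂ (F t)]
variable (β : ∀ s t : ℕ+, E (s + t) →ₗᵢ[ℂ] (E s ⊗[ℂ] E t))
variable (γ : ∀ s t : ℕ+, F (s + t) →ₗᵢ[ℂ] (F s ⊗[ℂ] F t))

/-- The associativity condition in the definition of a subproduct system. -/
def SubprodAssoc : Prop :=
  ∀ r s t : ℕ+, ∀ u : E (r + s + t),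
    (TensorProduct.assoc ℂ (E r) (E s) (E t))
      (TensorProduct.map (β r s).toLinearMap LinearMap.id (β (r + s) t u))
    = TensorProduct.map LinearMap.id (β s t).toLinearMap
        (β r (s + t) (castE E (add_assoc r s t) u))

/-- `(x, y)` is a basis of type `𝓔₁(a)` of the subproduct system `(E, β)`. -/
def IsBasisE1 (a : ℝ) (x y : ∀ t : ℕ+, E t) : Prop :=
  (∀ t, ‖x t‖ = 1) ∧ (∀ t, ‖y t‖ = 1) ∧
  (∀ t : ℕ+, (inner ℂ (x t) (y t) : ℂ) = (a : ℂ) ^ (t : ℕ)) ∧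
  (∀ s t : ℕ+, β s t (x (s + t)) = x s ⊗ₜ[ℂ] x t) ∧
  (∀ s t : ℕ+, β s t (y (s + t)) = y s ⊗ₜ[ℂ] y t)

/-- `(x, y)` is a basis of type `𝓔₂(a)` of the subproduct system `(E, β)`. -/
def IsBasisE2 (a : ℝ) (x y : ∀ t : ℕ+, E t) : Prop :=
  (∀ t, ‖x t‖ = 1) ∧ (∀ t, ‖y t‖ = 1) ∧
  (∀ t : ℕ+, (inner ℂ (x t) (y t) : ℂ) = (a : ℂ) ^ (t : ℕ)) ∧
  (∀ s t : ℕ+, Even (s : ℕ) → β s t (x (s + t)) = x s ⊗ₜ[ℂ] x t) ∧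
  (∀ s t : ℕ+, ¬ Even (s : ℕ) → β s t (x (s + t)) = x s ⊗ₜ[ℂ] y t) ∧
  (∀ s t : ℕ+, Even (s : ℕ) → β s t (y (s + t)) = y s ⊗ₜ[ℂ] y t) ∧
  (∀ s t : ℕ+, ¬ Even (s : ℕ) → β s t (y (s + t)) = y s ⊗ₜ[ℂ] x t)

/-- `(x, y)` is a basis of type `𝓔₃(λ)` of the subproduct system `(E, β)`. -/
def IsBasisE3 (l : ℂ) (x y : ∀ t : ℕ+, E t) : Prop :=
  (∀ t, ‖x t‖ = 1) ∧
  (∀ t : ℕ+, ‖y t‖ ^ 2 = ∑ k ∈ Finset.range (t : ℕ), ‖l‖ ^ (2 * k)) ∧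
  (∀ t : ℕ+, (inner ℂ (x t) (y t) : ℂ) = 0) ∧
  (∀ s t : ℕ+, β s t (x (s + t)) = x s ⊗ₜ[ℂ] x t) ∧
  (∀ s t : ℕ+, β s t (y (s + t)) = y s ⊗ₜ[ℂ] x t + l ^ (s : ℕ) • (x s ⊗ₜ[ℂ] y t))

/-- `(x, y)` is a basis of type `𝓔₄` of the subproduct system `(E, β)`. -/
def IsBasisE4 (x y : ∀ t : ℕ+, E t) : Prop :=
  (∀ t, ‖x t‖ = 1) ∧ (∀ t, ‖y t‖ = 1) ∧
  (∀ t : ℕ+, (inner ℂ (x t) (y t) : ℂ) = 0) ∧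
  (∀ s t : ℕ+, β s t (x (s + t)) = x s ⊗ₜ[ℂ] x t) ∧
  (∀ s t : ℕ+, β s t (y (s + t)) = y s ⊗ₜ[ℂ] x t)

/-- `(x, y)` is a basis of type `𝓔₅` of the subproduct system `(E, β)`. -/
def IsBasisE5 (x y : ∀ t : ℕ+, E t) : Prop :=
  (∀ t, ‖x t‖ = 1) ∧ (∀ t, ‖y t‖ = 1) ∧
  (∀ t : ℕ+, (inner ℂ (x t) (y t) : ℂ) = 0) ∧
  (∀ s t : ℕ+, β s t (x (s + t)) = x s ⊗ₜ[ℂ] x t) ∧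
  (∀ s t : ℕ+, β s t (y (s + t)) = x s ⊗ₜ[ℂ] y t)

/-- The five types of bases, together with their parameters. -/
inductive BType : Type
  | e1 (a : ℝ) | e2 (a : ℝ) | e3 (l : ℂ) | e4 | e5

/-- `(x, y)` is a basis of the subproduct system `(E, β)` of the given type (this includes
the admissibility constraints `a ∈ [0,1)`, resp. `λ ≠ 0`, on the parameter). -/
def IsBasisOfType : BType → (∀ t : ℕ+, E t) → (∀ t : ℕ+, E t) → Prop
  | .e1 a => fun x y => 0 ≤ a ∧ a < 1 ∧ IsBasisE1 E β a x y
  | .e2 a => fun x y => 0 ≤ a ∧ a < 1 ∧ IsBasisE2 E β a x y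
  | .e3 l => fun x y => l ≠ 0 ∧ IsBasisE3 E β l x y
  | .e4 => fun x y => IsBasisE4 E β x y
  | .e5 => fun x y => IsBasisE5 E β x y

/-- The family `θ` of unitaries intertwines the subproduct systems `(E, β)` and `(F, γ)`,
i.e. it is an isomorphism of subproduct systems. -/
def Intertwines (θ : ∀ t : ℕ+, E t ≃ₗᵢ[ℂ] F t) : Prop :=
  ∀ s t : ℕ+, ∀ w : E (s + t),
    γ s t (θ (s + t) w) =
      TensorProduct.map (θ s).toLinearEquiv.toLinearMap (θ t).toLinearEquiv.toLinearMap
        (β s t w)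

/-- The structure maps of the subproduct system `(E_{mt})_t` obtained by restricting
`(E, β)` to the multiples of `m`. -/
def restrictβ (m : ℕ+) :
    ∀ s t : ℕ+, E (m * (s + t)) →ₗᵢ[ℂ] (E (m * s) ⊗[ℂ] E (m * t)) := fun s t =>
  (β (m * s) (m * t)).comp (castE E (by rw [mul_add])).toLinearIsometry

end Discrete


lemma expand_two {V : Type*} [NormedAddCommGroup V] [InnerProductSpace ℂ V]
    (hdim : Module.finrank ℂ V = 2) (x y : V)
    (hx : ‖x‖ = 1) (hy : ‖y‖ = 1) (hxy : (inner ℂ x y : ℂ) = 0) (v : V) :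
    v = (inner ℂ x v : ℂ) • x + (inner ℂ y v : ℂ) • y := by
  haveI : FiniteDimensional ℂ V := .of_finrank_eq_succ (n := 1) hdim
  have hON : Orthonormal ℂ ![x, y] := by
    rw [orthonormal_iff_ite]
    intro i j
    have hyx : (inner ℂ y x : ℂ) = 0 := inner_eq_zero_symm.mp hxy
    have hxx : (inner ℂ x x : ℂ) = 1 := by
      rw [inner_self_eq_norm_sq_to_K, hx]; norm_num
    have hyy : (inner ℂ y y : ℂ) = 1 := by
      rw [inner_self_eq_norm_sq_to_K, hy]; norm_num
    fin_cases i <;> fin_cases j <;>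
      simp_all
  let b0 := basisOfOrthonormalOfCardEqFinrank hON (by simp [hdim])
  have hb0 : ⇑b0 = ![x, y] := coe_basisOfOrthonormalOfCardEqFinrank hON _
  let b : OrthonormalBasis (Fin 2) ℂ V := b0.toOrthonormalBasis (by rwa [hb0])
  have hb : ∀ i, b i = ![x, y] i := fun i => by
    simp [b, Module.Basis.coe_toOrthonormalBasis, hb0]
  have := b.sum_repr' v
  rw [Fin.sum_univ_two, hb 0, hb 1] at this
  simpa using this.symm

/-- **Lemma 1.11, case `𝓔₅`.** -/
theorem statement7
    (E : ℕ+ → Type*) [∀ t, NormedAddCommGroup (E t)] [∀ t, InnerProductSpace ℂ (E t)]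
    (hdim : ∀ t, Module.finrank ℂ (E t) = 2)
    (β : ∀ s t : ℕ+, E (s + t) →ₗᵢ[ℂ] (E s ⊗[ℂ] E t))
    (hassoc : SubprodAssoc E β)
    (x y : ∀ t : ℕ+, E t) (hxy : IsBasisE5 E β x y)
    (θ : ∀ t : ℕ+, E t ≃ₗᵢ[ℂ] E t) (hθ : Intertwines E E β β θ) :
    ∃ c b : ℝ, ∀ t : ℕ+,
      θ t (x t) = Complex.exp (Complex.I * (c : ℂ) * ((t : ℕ) : ℂ)) • x t ∧
      θ t (y t) = (Complex.exp (Complex.I * (b : ℂ)) *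
        Complex.exp (Complex.I * (c : ℂ) * ((t : ℕ) : ℂ))) • y t := by
  obtain ⟨hx1, hy1, hio, hβx, hβy⟩ := hxy
  have hxx : ∀ t, (inner ℂ (x t) (x t) : ℂ) = 1 := fun t => by
    rw [inner_self_eq_norm_sq_to_K, hx1]; norm_num
  have hyy : ∀ t, (inner ℂ (y t) (y t) : ℂ) = 1 := fun t => by
    rw [inner_self_eq_norm_sq_to_K, hy1]; norm_num
  have hyx : ∀ t, (inner ℂ (y t) (x t) : ℂ) = 0 := fun t =>
    inner_eq_zero_symm.mp (hio t)
  set A : ℕ+ → ℂ := fun t => inner ℂ (x t) (θ t (x t)) with hA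
  set B : ℕ+ → ℂ := fun t => inner ℂ (y t) (θ t (x t)) with hB
  set C : ℕ+ → ℂ := fun t => inner ℂ (x t) (θ t (y t)) with hC
  set D : ℕ+ → ℂ := fun t => inner ℂ (y t) (θ t (y t)) with hD
  have hθx : ∀ t, θ t (x t) = A t • x t + B t • y t := fun t =>
    expand_two (hdim t) _ _ (hx1 t) (hy1 t) (hio t) _
  have hθy : ∀ t, θ t (y t) = C t • x t + D t • y t := fun t =>
    expand_two (hdim t) _ _ (hx1 t) (hy1 t) (hio t) _
  have keyx : ∀ s t : ℕ+,
      A (s+t) • (x s ⊗ₜ[ℂ] x t) + B (s+t) • (x s ⊗ₜ[ℂ] y t)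
        = (A s • x s + B s • y s) ⊗ₜ[ℂ] (A t • x t + B t • y t) := by
    intro s t
    have key := hθ s t (x (s+t))
    rw [hβx s t, TensorProduct.map_tmul] at key
    simpa only [hθx, map_add, map_smul, hβx, hβy, LinearEquiv.coe_coe,
      LinearIsometryEquiv.coe_toLinearEquiv] using key
  have keyy : ∀ s t : ℕ+,
      C (s+t) • (x s ⊗ₜ[ℂ] x t) + D (s+t) • (x s ⊗ₜ[ℂ] y t)
        = (A s • x s + B s • y s) ⊗ₜ[ℂ] (C t • x t + D t • y t) := by
    intro s t
    have key := hθ s t (y (s+t))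
    rw [hβy s t, TensorProduct.map_tmul] at key
    simpa only [hθx, hθy, map_add, map_smul, hβx, hβy, LinearEquiv.coe_coe,
      LinearIsometryEquiv.coe_toLinearEquiv] using key
  have iar : ∀ {s t : ℕ+} (a b c : E s ⊗[ℂ] E t),
      inner ℂ a (b + c) = inner ℂ a b + inner ℂ a c := fun a b c => by
        rw [TensorProduct.inner_def, TensorProduct.inner_def, TensorProduct.inner_def, map_add]
  have ism : ∀ {s t : ℕ+} (a b : E s ⊗[ℂ] E t) (r : ℂ),
      inner ℂ a (r • b) = r * inner ℂ a b := fun a b r => by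
        rw [TensorProduct.inner_def, TensorProduct.inner_def, map_smul, smul_eq_mul]
  have hB0 : ∀ t, B t = 0 := by
    intro t
    have h := congrArg (fun z => (inner ℂ (y t ⊗ₜ[ℂ] y t) z : ℂ)) (keyx t t)
    simp only [TensorProduct.add_tmul, TensorProduct.tmul_add, iar, ism, inner_add_right,
      inner_smul_right, inner_tmul, hxx, hyy, hio, hyx, mul_zero, zero_mul, mul_one, one_mul,
      add_zero, zero_add] at h
    exact mul_self_eq_zero.mp h.symm
  have hAmul : ∀ s t : ℕ+, A (s+t) = A s * A t := by
    intro s t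
    have h := congrArg (fun z => (inner ℂ (x s ⊗ₜ[ℂ] x t) z : ℂ)) (keyx s t)
    simp only [TensorProduct.add_tmul, TensorProduct.tmul_add, iar, ism, inner_add_right,
      inner_smul_right, inner_tmul, hxx, hyy, hio, hyx, hB0, mul_zero, zero_mul, mul_one,
      one_mul, add_zero, zero_add] at h
    exact h
  have hCmul : ∀ s t : ℕ+, C (s+t) = A s * C t := by
    intro s t
    have h := congrArg (fun z => (inner ℂ (x s ⊗ₜ[ℂ] x t) z : ℂ)) (keyy s t)
    simp only [TensorProduct.add_tmul, TensorProduct.tmul_add, iar, ism, inner_add_right,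
      inner_smul_right, inner_tmul, hxx, hyy, hio, hyx, hB0, mul_zero, zero_mul, mul_one,
      one_mul, add_zero, zero_add] at h
    exact h
  have hDmul : ∀ s t : ℕ+, D (s+t) = A s * D t := by
    intro s t
    have h := congrArg (fun z => (inner ℂ (x s ⊗ₜ[ℂ] y t) z : ℂ)) (keyy s t)
    simp only [TensorProduct.add_tmul, TensorProduct.tmul_add, iar, ism, inner_add_right,
      inner_smul_right, inner_tmul, hxx, hyy, hio, hyx, hB0, mul_zero, zero_mul, mul_one,
      one_mul, add_zero, zero_add] at h
    exact h
  have hAunit : ∀ t, (starRingEnd ℂ) (A t) * A t = 1 := by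
    intro t
    have h : (inner ℂ (θ t (x t)) (θ t (x t)) : ℂ) = 1 := by
      rw [LinearIsometryEquiv.inner_map_map, hxx]
    rw [hθx t, hB0 t, zero_smul, add_zero, inner_smul_left, inner_smul_right, hxx,
      mul_one] at h
    exact h
  have hAabs : ∀ t, ‖A t‖ = 1 := by
    intro t
    have h := hAunit t
    rw [mul_comm, Complex.mul_conj] at h
    have h2 : Complex.normSq (A t) = 1 := by exact_mod_cast h
    rw [Complex.norm_def, h2, Real.sqrt_one]
  have hAne : ∀ t, A t ≠ 0 := fun t h => by
    have := hAabs t; rw [h] at this; simp at this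
  have hC0 : ∀ t, C t = 0 := by
    intro t
    have h : (inner ℂ (θ t (x t)) (θ t (y t)) : ℂ) = 0 := by
      rw [LinearIsometryEquiv.inner_map_map, hio]
    rw [hθx t, hB0 t, zero_smul, add_zero, hθy t] at h
    simp only [inner_add_right, inner_smul_left, inner_smul_right, hxx, hio, mul_one,
      mul_zero, add_zero] at h
    rcases mul_eq_zero.mp h with h' | h'
    · exact h'
    · exact absurd ((map_eq_zero _).mp h') (hAne t)
  have hDunit : ∀ t, (starRingEnd ℂ) (D t) * D t = 1 := by
    intro t
    have h : (inner ℂ (θ t (y t)) (θ t (y t)) : ℂ) = 1 := by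
      rw [LinearIsometryEquiv.inner_map_map, hyy]
    rw [hθy t, hC0 t, zero_smul, zero_add, inner_smul_left, inner_smul_right, hyy,
      mul_one] at h
    exact h
  have hDabs : ∀ t, ‖D t‖ = 1 := by
    intro t
    have h := hDunit t
    rw [mul_comm, Complex.mul_conj] at h
    have h2 : Complex.normSq (D t) = 1 := by exact_mod_cast h
    rw [Complex.norm_def, h2, Real.sqrt_one]
  set c : ℝ := (A 1).arg with hc
  have hA1 : A 1 = Complex.exp (Complex.I * c) := by
    have h := Complex.norm_mul_exp_arg_mul_I (A 1)
    rw [hAabs 1] at h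
    rw [mul_comm]
    simpa using h.symm
  have hAt : ∀ t : ℕ+, A t = Complex.exp (Complex.I * c * ((t : ℕ) : ℂ)) := by
    intro t
    induction t using PNat.recOn with
    | one => simpa using hA1
    | succ n ih =>
        rw [hAmul n 1, ih, hA1, ← Complex.exp_add]
        congr 1
        push_cast [PNat.add_coe, PNat.one_coe]
        ring
  set E0 : ℂ := D 1 / A 1 with hE0def
  have hE0abs : ‖E0‖ = 1 := by
    rw [hE0def, norm_div, hDabs 1, hAabs 1, div_one]
  set b : ℝ := E0.arg with hb
  have hE0 : E0 = Complex.exp (Complex.I * b) := by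
    have h := Complex.norm_mul_exp_arg_mul_I E0
    rw [hE0abs] at h
    rw [mul_comm]
    simpa using h.symm
  have hD1 : D 1 = Complex.exp (Complex.I * b) * Complex.exp (Complex.I * c) := by
    have h : D 1 = E0 * A 1 := by
      rw [hE0def, div_mul_cancel₀ _ (hAne 1)]
    rw [h, hE0, hA1]
  have hDt : ∀ t : ℕ+, D t = Complex.exp (Complex.I * b) *
      Complex.exp (Complex.I * c * ((t : ℕ) : ℂ)) := by
    intro t
    induction t using PNat.recOn with
    | one => simpa using hD1
    | succ n _ =>
        rw [hDmul n 1, hAt n, hD1, mul_left_comm, ← Complex.exp_add]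
        congr 2
        push_cast [PNat.add_coe, PNat.one_coe]
        ring
  refine ⟨c, b, fun t => ⟨?_, ?_⟩⟩
  · rw [hθx t, hB0 t, zero_smul, add_zero, hAt t]
  · rw [hθy t, hC0 t, zero_smul, zero_add, hDt t]


end SubprodHilbert
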